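/- arXiv:1910.01922 — 4 statements merged into one kernel-verified Lean document; each statement's English description precedes it below -/
import Mathlib

section
/- Let (M_k) be a sequence of positive reals satisfying condition (M.2): there exist A ≥ 1 and H > 0 with M_{2k} ≤ A H^{2k} M_k^2 for all k, together with M_0 = 1, log-convexity M_k² ≤ M_{k-1}M_{k+1}, and stability M_{k+1} ≤ A H^k M_k. Then for every r > 0 the associated function satisfies 2 M(r/H) ≤ M(r) + log A, where M(r) = sup_k log(r^k/M_k). -/
/-- The associated function of a sequence `(M_k)`, valued in the extended reals:
`M(r) = sup_k log (r ^ k / M k)`. -/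
noncomputable def assocFnE (M : ℕ → ℝ) (r : ℝ) : EReal :=
  ⨆ k : ℕ, ((Real.log (r ^ k / M k) : EReal))

theorem stmt_5 (M : ℕ → ℝ) (A H : ℝ) (hA : 1 ≤ A) (hH : 0 < H)
    (hpos : ∀ k, 0 < M k) (h0 : M 0 = 1)
    (hlc : ∀ k, (M (k + 1)) ^ 2 ≤ M k * M (k + 2))
    (hM1 : ∀ k, M (k + 1) ≤ A * H ^ k * M k)
    (hM2 : ∀ k, M (2 * k) ≤ A * H ^ (2 * k) * (M k) ^ 2) :
    ∀ r : ℝ, 0 < r →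
      2 * assocFnE M (r / H) ≤ assocFnE M r + ((Real.log A : ℝ) : EReal) := by
  intro r hr
  have hA0 : (0 : ℝ) < A := lt_of_lt_of_le one_pos hA
  have h2pos : (0 : EReal) < (2 : EReal) := by
    have : ((2 : ℝ) : EReal) = (2 : EReal) := by norm_cast
    rw [← this]; exact_mod_cast (by norm_num : (0:ℝ) < 2)
  have h2top : (2 : EReal) ≠ ⊤ := by
    have : ((2 : ℝ) : EReal) = (2 : EReal) := by norm_cast
    rw [← this]; exact EReal.coe_ne_top 2
  rw [mul_comm, ← EReal.le_div_iff_mul_le h2pos h2top]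
  refine iSup_le fun k => ?_
  rw [EReal.le_div_iff_mul_le h2pos h2top]
  -- per-index inequality
  have key : 2 * Real.log ((r / H) ^ k / M k)
      ≤ Real.log (r ^ (2 * k) / M (2 * k)) + Real.log A := by
    have hx : (0 : ℝ) < (r / H) ^ k / M k :=
      div_pos (pow_pos (div_pos hr hH) k) (hpos k)
    have harg : ((r / H) ^ k / M k) ^ 2 ≤ A * (r ^ (2 * k) / M (2 * k)) := by
      have h2k : 0 < M (2 * k) := hpos (2 * k)
      have hMk : 0 < M k := hpos k
      have h1 : r ^ (2 * k) / (A * H ^ (2 * k) * M k ^ 2) ≤ r ^ (2 * k) / M (2 * k) :=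
        div_le_div_of_nonneg_left (by positivity) h2k (hM2 k)
      calc ((r / H) ^ k / M k) ^ 2
          = A * (r ^ (2 * k) / (A * H ^ (2 * k) * M k ^ 2)) := by
            rw [div_pow, pow_mul, div_pow]
            field_simp
            ring
        _ ≤ A * (r ^ (2 * k) / M (2 * k)) :=
            mul_le_mul_of_nonneg_left h1 (le_of_lt hA0)
    calc 2 * Real.log ((r / H) ^ k / M k)
        = Real.log (((r / H) ^ k / M k) ^ 2) := by
          rw [Real.log_pow]; push_cast; ring
      _ ≤ Real.log (A * (r ^ (2 * k) / M (2 * k))) :=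
          Real.log_le_log (pow_pos hx 2) harg
      _ = Real.log (r ^ (2 * k) / M (2 * k)) + Real.log A := by
          rw [Real.log_mul (ne_of_gt hA0) (ne_of_gt (div_pos (pow_pos hr _) (hpos _)))]; ring
  calc ((Real.log ((r / H) ^ k / M k) : EReal)) * 2
      = ((2 * Real.log ((r / H) ^ k / M k) : ℝ) : EReal) := by
        rw [mul_comm]
        norm_cast
    _ ≤ ((Real.log (r ^ (2 * k) / M (2 * k)) + Real.log A : ℝ) : EReal) := by
        exact_mod_cast key
    _ = ((Real.log (r ^ (2 * k) / M (2 * k)) : ℝ) : EReal) + ((Real.log A : ℝ) : EReal) := by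
        push_cast; rfl
    _ ≤ assocFnE M r + ((Real.log A : ℝ) : EReal) := by
        apply add_le_add_left
        exact le_iSup (fun j => ((Real.log (r ^ j / M j) : ℝ) : EReal)) (2 * k)
end

section
/- Fourier-coefficient model of Theorem 3.2 (sufficiency of the Diophantine condition for Roumieu solvability on the torus): let a ∈ ℝ and let M be the associated function of a sequence (M_k) satisfying (M.0)–(M.3) and (LC). Suppose that for every N > 0 there exists C_N > 0 such that |k + a m| ≥ C_N exp(−M(N(|k| + |m|))) for all (k,m) ∈ ℤ² with k + a m ≠ 0. Let (f_{km})_{(k,m)∈ℤ²} be complex numbers with f_{km} = 0 whenever k + am = 0, and suppose that for every N > 0 there is C > 0 with |f_{km}| ≤ C exp(M(N(|k|+|m|))) for all k, m. Define u_{km} = f_{km}/(i(k+am)) when k + am ≠ 0 and u_{km} = 0 otherwise. Then for every D > 0 there exists C_D > 0 with |u_{km}| ≤ C_D exp(M(D(|k|+|m|))) for all (k,m) ∈ ℤ². -/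
noncomputable def assocFn (M : ℕ → ℝ) (r : ℝ) : ℝ :=
  sSup {x : ℝ | ∃ j : ℕ, x = Real.log (r ^ j / M j)}

section Aux
variable (Mk : ℕ → ℝ) {A H ℓ C₀ : ℝ}

lemma assoc_mem0 (h0 : Mk 0 = 1) (r : ℝ) :
    (0 : ℝ) ∈ {x : ℝ | ∃ j : ℕ, x = Real.log (r ^ j / Mk j)} :=
  ⟨0, by simp [h0]⟩

lemma assoc_bdd (hpos : ∀ k, 0 < Mk k) (hC₀ : 1 ≤ C₀) (hℓ : 0 < ℓ)
    (hM3 : ∀ k : ℕ, (k.factorial : ℝ) ≤ C₀ * ℓ ^ k * Mk k) {r : ℝ} (hr : 0 ≤ r) :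
    BddAbove {x : ℝ | ∃ j : ℕ, x = Real.log (r ^ j / Mk j)} := by
  refine ⟨Real.log C₀ + ℓ * r, ?_⟩
  rintro x ⟨j, rfl⟩
  have hℓr : 0 ≤ ℓ * r := mul_nonneg hℓ.le hr
  have hlogC : 0 ≤ Real.log C₀ := Real.log_nonneg hC₀
  rcases eq_or_lt_of_le (div_nonneg (by positivity) (hpos j).le : (0:ℝ) ≤ r ^ j / Mk j) with h | h
  · rw [← h, Real.log_zero]; linarith
  · have key : r ^ j / Mk j ≤ C₀ * Real.exp (ℓ * r) := by
      have hfac : (0:ℝ) < (j.factorial : ℝ) := by positivity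
      have h1 : r ^ j / Mk j ≤ C₀ * ℓ ^ j * r ^ j / (j.factorial : ℝ) := by
        rw [div_le_div_iff₀ (hpos j) hfac]
        have := hM3 j
        have hrj : (0:ℝ) ≤ r ^ j := by positivity
        nlinarith [hpos j, pow_pos hℓ j, mul_le_mul_of_nonneg_left (hM3 j) hrj]
      have h2 : ℓ ^ j * r ^ j / (j.factorial : ℝ) ≤ Real.exp (ℓ * r) := by
        rw [← mul_pow]
        exact Real.pow_div_factorial_le_exp (x := ℓ * r) hℓr j
      calc r ^ j / Mk j ≤ C₀ * ℓ ^ j * r ^ j / (j.factorial : ℝ) := h1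
        _ = C₀ * (ℓ ^ j * r ^ j / (j.factorial : ℝ)) := by ring
        _ ≤ C₀ * Real.exp (ℓ * r) := by
            exact mul_le_mul_of_nonneg_left h2 (by linarith)
    calc Real.log (r ^ j / Mk j) ≤ Real.log (C₀ * Real.exp (ℓ * r)) :=
          Real.log_le_log h key
      _ = Real.log C₀ + ℓ * r := by
          rw [Real.log_mul (by linarith) (Real.exp_pos _).ne', Real.log_exp]

lemma assoc_nonneg (h0 : Mk 0 = 1) (hpos : ∀ k, 0 < Mk k) (hC₀ : 1 ≤ C₀) (hℓ : 0 < ℓ)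
    (hM3 : ∀ k : ℕ, (k.factorial : ℝ) ≤ C₀ * ℓ ^ k * Mk k) {r : ℝ} (hr : 0 ≤ r) :
    0 ≤ assocFn Mk r :=
  le_csSup (assoc_bdd Mk hpos hC₀ hℓ hM3 hr) (assoc_mem0 Mk h0 r)

lemma assoc_two (h0 : Mk 0 = 1) (hpos : ∀ k, 0 < Mk k) (hC₀ : 1 ≤ C₀)
    (hℓ : 0 < ℓ) (hA : 1 ≤ A) (hH : 0 < H)
    (hM3 : ∀ k : ℕ, (k.factorial : ℝ) ≤ C₀ * ℓ ^ k * Mk k)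
    (hM2 : ∀ k, Mk (2 * k) ≤ A * H ^ (2 * k) * (Mk k) ^ 2)
    {r : ℝ} (hr : 0 ≤ r) :
    2 * assocFn Mk r ≤ Real.log A + assocFn Mk (H * r) := by
  have hHr : 0 ≤ H * r := mul_nonneg hH.le hr
  have hbdd := assoc_bdd Mk hpos hC₀ hℓ hM3 hHr
  have hlogA : 0 ≤ Real.log A := Real.log_nonneg hA
  have hMH := assoc_nonneg Mk h0 hpos hC₀ hℓ hM3 hHr
  have hsup : assocFn Mk r ≤ (Real.log A + assocFn Mk (H * r)) / 2 := by
    apply csSup_le ⟨0, assoc_mem0 Mk h0 r⟩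
    rintro x ⟨j, rfl⟩
    rcases eq_or_lt_of_le (div_nonneg (by positivity) (hpos j).le : (0:ℝ) ≤ r ^ j / Mk j) with h | h
    · rw [← h, Real.log_zero]; linarith
    · have hmemj : Real.log ((H * r) ^ (2 * j) / Mk (2 * j)) ≤ assocFn Mk (H * r) :=
        le_csSup hbdd ⟨2 * j, rfl⟩
      have hApos : (0:ℝ) < A := by linarith
      have hkey : (r ^ j / Mk j) ^ 2 ≤ A * ((H * r) ^ (2 * j) / Mk (2 * j)) := by
        rw [div_pow, mul_div_assoc', div_le_div_iff₀ (pow_pos (hpos j) 2) (hpos (2 * j))]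
        have e1 : (r ^ j) ^ 2 = r ^ (2 * j) := by rw [← pow_mul, mul_comm]
        have e2 : (H * r) ^ (2 * j) = H ^ (2 * j) * r ^ (2 * j) := mul_pow _ _ _
        rw [e1, e2]
        have hrj : (0:ℝ) ≤ r ^ (2 * j) := by positivity
        nlinarith [mul_le_mul_of_nonneg_left (hM2 j) hrj]
      have hpos2 : (0:ℝ) < A * ((H * r) ^ (2 * j) / Mk (2 * j)) := by
        have : (0:ℝ) < (r ^ j / Mk j) ^ 2 := by positivity
        linarith
      have hHrj : (0:ℝ) < (H * r) ^ (2 * j) / Mk (2 * j) := by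
        by_contra hc
        push_neg at hc
        nlinarith
      have := Real.log_le_log (by positivity) hkey
      rw [Real.log_pow, Real.log_mul hApos.ne' hHrj.ne'] at this
      push_cast at this
      linarith
  linarith
end Aux

theorem stmt_16 (Mk : ℕ → ℝ) (A H ℓ C₀ : ℝ) (hA : 1 ≤ A) (hH : 0 < H)
    (hℓ : 0 < ℓ) (hC₀ : 0 < C₀)
    (hpos : ∀ k, 0 < Mk k) (h0 : Mk 0 = 1)
    (hlc : ∀ k, (Mk (k + 1)) ^ 2 ≤ Mk k * Mk (k + 2))
    (hM1 : ∀ k, Mk (k + 1) ≤ A * H ^ k * Mk k)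
    (hM2 : ∀ k, Mk (2 * k) ≤ A * H ^ (2 * k) * (Mk k) ^ 2)
    (hM3 : ∀ k : ℕ, (k.factorial : ℝ) ≤ C₀ * ℓ ^ k * Mk k)
    (a : ℝ)
    (hdioph : ∀ N : ℝ, 0 < N → ∃ C : ℝ, 0 < C ∧ ∀ k m : ℤ,
      (k : ℝ) + a * m ≠ 0 →
      C * Real.exp (-(assocFn Mk (N * (|(k : ℝ)| + |(m : ℝ)|)))) ≤ |(k : ℝ) + a * m|)
    (f : ℤ → ℤ → ℂ)
    (hf0 : ∀ k m : ℤ, (k : ℝ) + a * m = 0 → f k m = 0)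
    (hf : ∀ N : ℝ, 0 < N → ∃ C : ℝ, 0 < C ∧ ∀ k m : ℤ,
      ‖f k m‖ ≤ C * Real.exp (assocFn Mk (N * (|(k : ℝ)| + |(m : ℝ)|))))
    (u : ℤ → ℤ → ℂ)
    (hu : ∀ k m : ℤ, u k m =
      if (k : ℝ) + a * m = 0 then 0
      else f k m / (Complex.I * ((k : ℂ) + (a : ℂ) * (m : ℂ)))) :
    ∀ D : ℝ, 0 < D → ∃ C : ℝ, 0 < C ∧ ∀ k m : ℤ,
      ‖u k m‖ ≤ C * Real.exp (assocFn Mk (D * (|(k : ℝ)| + |(m : ℝ)|))) := by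
  intro D hD
  have hC₀1 : 1 ≤ C₀ := by
    have := hM3 0
    simpa [h0] using this
  set N : ℝ := D / H with hN
  have hNpos : 0 < N := div_pos hD hH
  obtain ⟨C₁, hC₁, hd⟩ := hdioph N hNpos
  obtain ⟨C₂, hC₂, hfN⟩ := hf N hNpos
  refine ⟨C₂ * A / C₁, by positivity, fun k m => ?_⟩
  set r : ℝ := |(k : ℝ)| + |(m : ℝ)| with hr
  have hr0 : 0 ≤ r := by positivity
  by_cases hz : (k : ℝ) + a * m = 0
  · rw [hu k m, if_pos hz]
    simp only [norm_zero]
    positivity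
  · rw [hu k m, if_neg hz]
    have hc : ((k : ℂ) + (a : ℂ) * (m : ℂ)) = (((k : ℝ) + a * m : ℝ) : ℂ) := by
      push_cast; ring
    rw [norm_div, norm_mul, Complex.norm_I, one_mul, hc, Complex.norm_real, Real.norm_eq_abs]
    have hden : 0 < |(k : ℝ) + a * m| := abs_pos.mpr hz
    have hd1 : C₁ * Real.exp (-(assocFn Mk (N * r))) ≤ |(k : ℝ) + a * m| := hd k m hz
    have hf1 : ‖f k m‖ ≤ C₂ * Real.exp (assocFn Mk (N * r)) := hfN k m
    have hlb : 0 < C₁ * Real.exp (-(assocFn Mk (N * r))) := by positivity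
    have step1 : ‖f k m‖ / |(k : ℝ) + a * m| ≤
        (C₂ * Real.exp (assocFn Mk (N * r))) / (C₁ * Real.exp (-(assocFn Mk (N * r)))) :=
      div_le_div₀ (by positivity) hf1 hlb hd1
    have heq : (C₂ * Real.exp (assocFn Mk (N * r))) / (C₁ * Real.exp (-(assocFn Mk (N * r)))) =
        (C₂ / C₁) * Real.exp (2 * assocFn Mk (N * r)) := by
      have h1 : Real.exp (assocFn Mk (N * r)) / Real.exp (-(assocFn Mk (N * r))) =
          Real.exp (2 * assocFn Mk (N * r)) := by
        rw [← Real.exp_sub]; ring_nf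
      rw [mul_div_mul_comm, h1]
    have hNr0 : 0 ≤ N * r := mul_nonneg hNpos.le hr0
    have h2M : 2 * assocFn Mk (N * r) ≤ Real.log A + assocFn Mk (H * (N * r)) :=
      assoc_two Mk h0 hpos hC₀1 hℓ hA hH hM3 hM2 hNr0
    have hHN : H * (N * r) = D * r := by
      rw [hN]; field_simp
    rw [hHN] at h2M
    have step2 : Real.exp (2 * assocFn Mk (N * r)) ≤ A * Real.exp (assocFn Mk (D * r)) := by
      calc Real.exp (2 * assocFn Mk (N * r)) ≤ Real.exp (Real.log A + assocFn Mk (D * r)) :=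
            Real.exp_le_exp.mpr h2M
        _ = A * Real.exp (assocFn Mk (D * r)) := by
            rw [Real.exp_add, Real.exp_log (by linarith)]
    calc ‖f k m‖ / |(k : ℝ) + a * m| ≤
          (C₂ / C₁) * Real.exp (2 * assocFn Mk (N * r)) := by rw [← heq]; exact step1
      _ ≤ (C₂ / C₁) * (A * Real.exp (assocFn Mk (D * r))) :=
          mul_le_mul_of_nonneg_left step2 (by positivity)
      _ = C₂ * A / C₁ * Real.exp (assocFn Mk (D * r)) := by ring
end

section
/- Fourier-coefficient model of Proposition 4.4 (sufficiency for Roumieu hypoellipticity on the torus): let a ∈ ℝ and M the associated function of a sequence satisfying (M.0)–(M.3), (LC), (M.2). Assume the set N = {(k,m) ∈ ℤ² : k + am = 0} is finite and for every N > 0 there exists C_N > 0 with |k + am| ≥ C_N exp(−M(N(|k|+|m|))) whenever k + am ≠ 0. Let (u_{km}) be complex numbers such that the sequence f_{km} := i(k+am) u_{km} satisfies: there exist C, N' > 0 with |f_{km}| ≤ C exp(−M(N'(|k|+|m|))) for all k,m, and also u_{km} is bounded polynomially. Then there exist C', N'' > 0 such that |u_{km}| ≤ C' exp(−M(N''(|k|+|m|)))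 for all (k,m) ∉ N. -/
lemma assocFn_bddAbove {Mk : ℕ → ℝ} {ℓ C₀ r : ℝ} (hℓ : 0 < ℓ) (hC₀ : 0 < C₀)
    (hpos : ∀ k, 0 < Mk k) (hM3 : ∀ k : ℕ, (k.factorial : ℝ) ≤ C₀ * ℓ ^ k * Mk k)
    (hr : 0 < r) :
    BddAbove {x : ℝ | ∃ j : ℕ, x = Real.log (r ^ j / Mk j)} := by
  refine ⟨Real.log (C₀ * Real.exp (ℓ * r)), ?_⟩
  rintro x ⟨j, rfl⟩
  have h1 : r ^ j / Mk j ≤ C₀ * Real.exp (ℓ * r) := by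
    have hfac : (0:ℝ) < j.factorial := by positivity
    have h2 : r ^ j / Mk j ≤ C₀ * ℓ ^ j * r ^ j / j.factorial := by
      rw [div_le_div_iff₀ (hpos j) hfac]
      have := hM3 j
      nlinarith [hpos j, pow_pos hℓ j, pow_pos hr j]
    have h3 : (ℓ * r) ^ j / j.factorial ≤ Real.exp (ℓ * r) :=
      Real.pow_div_factorial_le_exp (x := ℓ * r) (by positivity) j
    calc r ^ j / Mk j ≤ C₀ * ℓ ^ j * r ^ j / j.factorial := h2
      _ = C₀ * ((ℓ * r) ^ j / j.factorial) := by rw [mul_pow]; ring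
      _ ≤ C₀ * Real.exp (ℓ * r) := by nlinarith
  exact Real.log_le_log (div_pos (pow_pos hr j) (hpos j)) h1

/-- Key consequence of (M.2): `2 M(r/H) ≤ M(r) + log A`. -/
lemma assocFn_M2 {Mk : ℕ → ℝ} {A H ℓ C₀ r : ℝ} (hA : 1 ≤ A) (hH : 0 < H)
    (hℓ : 0 < ℓ) (hC₀ : 0 < C₀)
    (hpos : ∀ k, 0 < Mk k)
    (hM2 : ∀ k, Mk (2 * k) ≤ A * H ^ (2 * k) * (Mk k) ^ 2)
    (hM3 : ∀ k : ℕ, (k.factorial : ℝ) ≤ C₀ * ℓ ^ k * Mk k)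
    (hr : 0 < r) :
    2 * assocFn Mk (r / H) ≤ assocFn Mk r + Real.log A := by
  have hbdd := assocFn_bddAbove hℓ hC₀ hpos hM3 hr
  have hrH : 0 < r / H := by positivity
  have key : ∀ j : ℕ, 2 * Real.log ((r / H) ^ j / Mk j) ≤ assocFn Mk r + Real.log A := by
    intro j
    have hpj := hpos j
    have h2j := hpos (2 * j)
    have hA0 : (0:ℝ) < A := lt_of_lt_of_le zero_lt_one hA
    have hrj : (0:ℝ) < (r / H) ^ j / Mk j := by positivity
    have e1 : 2 * Real.log ((r / H) ^ j / Mk j) = Real.log (((r / H) ^ j / Mk j) ^ 2) := by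
      rw [Real.log_pow]; push_cast; ring
    have hsq : ((r / H) ^ j / Mk j) ^ 2 = r ^ (2 * j) / (H ^ (2 * j) * (Mk j) ^ 2) := by
      field_simp
      rw [div_pow, div_pow, ← pow_mul, ← pow_mul, mul_comm j 2, div_mul_cancel₀ _ (by positivity)]
    have hle : ((r / H) ^ j / Mk j) ^ 2 ≤ A * (r ^ (2 * j) / Mk (2 * j)) := by
      rw [hsq]
      rw [div_le_iff₀ (by positivity)]
      have hm2 := hM2 j
      have : A * (r ^ (2 * j) / Mk (2 * j)) * (H ^ (2 * j) * Mk j ^ 2)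
          = r ^ (2 * j) * (A * H ^ (2 * j) * Mk j ^ 2) / Mk (2 * j) := by ring
      rw [this, le_div_iff₀ h2j]
      have hr2j : (0:ℝ) ≤ r ^ (2 * j) := by positivity
      nlinarith
    have hmem : Real.log (r ^ (2 * j) / Mk (2 * j)) ≤ assocFn Mk r :=
      le_csSup hbdd ⟨2 * j, rfl⟩
    calc 2 * Real.log ((r / H) ^ j / Mk j)
        = Real.log (((r / H) ^ j / Mk j) ^ 2) := e1
      _ ≤ Real.log (A * (r ^ (2 * j) / Mk (2 * j))) := Real.log_le_log (by positivity) hle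
      _ = Real.log A + Real.log (r ^ (2 * j) / Mk (2 * j)) := by
          rw [Real.log_mul (ne_of_gt hA0) (by positivity)]
      _ ≤ assocFn Mk r + Real.log A := by linarith
  have hne : {x : ℝ | ∃ j : ℕ, x = Real.log ((r / H) ^ j / Mk j)}.Nonempty :=
    ⟨Real.log ((r / H) ^ 0 / Mk 0), 0, rfl⟩
  have : assocFn Mk (r / H) ≤ (assocFn Mk r + Real.log A) / 2 := by
    apply csSup_le hne
    rintro x ⟨j, rfl⟩
    linarith [key j]
  linarith

theorem stmt_17 (Mk : ℕ → ℝ) (A H ℓ C₀ : ℝ) (hA : 1 ≤ A) (hH : 0 < H)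
    (hℓ : 0 < ℓ) (hC₀ : 0 < C₀)
    (hpos : ∀ k, 0 < Mk k) (h0 : Mk 0 = 1)
    (hlc : ∀ k, (Mk (k + 1)) ^ 2 ≤ Mk k * Mk (k + 2))
    (hM1 : ∀ k, Mk (k + 1) ≤ A * H ^ k * Mk k)
    (hM2 : ∀ k, Mk (2 * k) ≤ A * H ^ (2 * k) * (Mk k) ^ 2)
    (hM3 : ∀ k : ℕ, (k.factorial : ℝ) ≤ C₀ * ℓ ^ k * Mk k)
    (a : ℝ)
    (hfin : Set.Finite {p : ℤ × ℤ | (p.1 : ℝ) + a * p.2 = 0})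
    (hdioph : ∀ N : ℝ, 0 < N → ∃ C : ℝ, 0 < C ∧ ∀ k m : ℤ,
      (k : ℝ) + a * m ≠ 0 →
      C * Real.exp (-(assocFn Mk (N * (|(k : ℝ)| + |(m : ℝ)|)))) ≤ |(k : ℝ) + a * m|)
    (u : ℤ → ℤ → ℂ)
    (hf : ∃ C N' : ℝ, 0 < C ∧ 0 < N' ∧ ∀ k m : ℤ,
      ‖Complex.I * ((k : ℂ) + (a : ℂ) * (m : ℂ)) * u k m‖ ≤
        C * Real.exp (-(assocFn Mk (N' * (|(k : ℝ)| + |(m : ℝ)|)))))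
    (hpoly : ∃ C : ℝ, ∃ p : ℕ, ∀ k m : ℤ,
      ‖u k m‖ ≤ C * (1 + |(k : ℝ)| + |(m : ℝ)|) ^ p) :
    ∃ C' N'' : ℝ, 0 < C' ∧ 0 < N'' ∧ ∀ k m : ℤ,
      (k : ℝ) + a * m ≠ 0 →
      ‖u k m‖ ≤ C' * Real.exp (-(assocFn Mk (N'' * (|(k : ℝ)| + |(m : ℝ)|)))) := by
  obtain ⟨C, N', hC, hN', hfb⟩ := hf
  have hN'' : 0 < N' / H := by positivity
  obtain ⟨Cd, hCd, hdio⟩ := hdioph (N' / H) hN''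
  have hA0 : (0:ℝ) < A := lt_of_lt_of_le zero_lt_one hA
  refine ⟨C * A / Cd, N' / H, by positivity, hN'', ?_⟩
  intro k m hkm
  set ρ : ℝ := |(k : ℝ)| + |(m : ℝ)| with hρdef
  have hρ : 0 < ρ := by
    rcases eq_or_ne k 0 with hk | hk
    · rcases eq_or_ne m 0 with hm | hm
      · exfalso; apply hkm; simp [hk, hm]
      · have : (0:ℝ) < |(m:ℝ)| := by
          simpa using abs_pos.mpr (by exact_mod_cast hm : ((m:ℝ)) ≠ 0)
        have := abs_nonneg ((k:ℝ)); simp only [hρdef]; linarith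
    · have : (0:ℝ) < |(k:ℝ)| := by
        simpa using abs_pos.mpr (by exact_mod_cast hk : ((k:ℝ)) ≠ 0)
      have := abs_nonneg ((m:ℝ)); simp only [hρdef]; linarith
  have hr : 0 < N' * ρ := by positivity
  -- key inequality
  have hkey : 2 * assocFn Mk (N' * ρ / H) ≤ assocFn Mk (N' * ρ) + Real.log A :=
    assocFn_M2 hA hH hℓ hC₀ hpos hM2 hM3 hr
  have hEq : N' / H * ρ = N' * ρ / H := by ring
  -- from hfb: |k+am| * |u| ≤ C exp(-M(N'ρ))
  have habs : ‖Complex.I * ((k : ℂ) + (a : ℂ) * (m : ℂ)) * u k m‖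
      = |(k : ℝ) + a * m| * ‖u k m‖ := by
    rw [norm_mul, norm_mul, Complex.norm_I, one_mul]
    congr 1
    have : ((k : ℂ) + (a : ℂ) * (m : ℂ)) = (((k : ℝ) + a * m : ℝ) : ℂ) := by push_cast; ring
    rw [this, Complex.norm_real, Real.norm_eq_abs]
  have h1 : |(k : ℝ) + a * m| * ‖u k m‖
      ≤ C * Real.exp (-(assocFn Mk (N' * ρ))) := by
    rw [← habs]; exact hfb k m
  have h2 : Cd * Real.exp (-(assocFn Mk (N' / H * ρ))) ≤ |(k : ℝ) + a * m| := hdio k m hkm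
  have hdpos : (0:ℝ) < Cd * Real.exp (-(assocFn Mk (N' / H * ρ))) := by positivity
  have h3 : Cd * Real.exp (-(assocFn Mk (N' / H * ρ))) * ‖u k m‖
      ≤ C * Real.exp (-(assocFn Mk (N' * ρ))) := by
    calc Cd * Real.exp (-(assocFn Mk (N' / H * ρ))) * ‖u k m‖
        ≤ |(k : ℝ) + a * m| * ‖u k m‖ := by
          apply mul_le_mul_of_nonneg_right h2 (norm_nonneg _)
      _ ≤ C * Real.exp (-(assocFn Mk (N' * ρ))) := h1
  have h4 : ‖u k m‖
      ≤ C * Real.exp (-(assocFn Mk (N' * ρ))) / (Cd * Real.exp (-(assocFn Mk (N' / H * ρ)))) := by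
    rw [le_div_iff₀ hdpos]
    linarith [h3]
  have h5 : C * Real.exp (-(assocFn Mk (N' * ρ))) / (Cd * Real.exp (-(assocFn Mk (N' / H * ρ))))
      ≤ C * A / Cd * Real.exp (-(assocFn Mk (N' / H * ρ))) := by
    rw [div_le_iff₀ hdpos]
    have : C * A / Cd * Real.exp (-(assocFn Mk (N' / H * ρ)))
        * (Cd * Real.exp (-(assocFn Mk (N' / H * ρ))))
        = C * A * Real.exp (-(assocFn Mk (N' / H * ρ)) + -(assocFn Mk (N' / H * ρ))) := by
      rw [Real.exp_add]; field_simp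
    rw [this]
    have hexp : Real.exp (-(assocFn Mk (N' * ρ)))
        ≤ A * Real.exp (-(assocFn Mk (N' / H * ρ)) + -(assocFn Mk (N' / H * ρ))) := by
      have : Real.exp (-(assocFn Mk (N' * ρ)))
          ≤ Real.exp (Real.log A + (-(assocFn Mk (N' / H * ρ)) + -(assocFn Mk (N' / H * ρ)))) := by
        apply Real.exp_le_exp.mpr
        rw [hEq]
        linarith [hkey]
      rw [Real.exp_add, Real.exp_log hA0] at this
      exact this
    nlinarith [Real.exp_pos (-(assocFn Mk (N' / H * ρ)) + -(assocFn Mk (N' / H * ρ)))]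
  exact h4.trans h5
end

section
/- Necessity of the Diophantine condition (sequence version of Proposition 5.2): let a ∈ ℝ and M the associated function of a Komatsu sequence. Suppose there exists N > 0 such that for every K ∈ ℕ there is (k_K, m_K) ∈ ℤ² with 0 < |k_K + a m_K| < (1/K) exp(−M(N(|k_K| + |m_K|))). Define f_{km} = 1 if (k,m) = (k_K, m_K) for some K (and the above inequality holds), and f_{km} = 0 otherwise, and let u_{km} = f_{km}/(i(k + am)) on the support of f. Then the family (u_{km}) violates every ultradistribution bound: for each fixed N' ≤ N there is no constant C with |u_{k_K m_K}| ≤ C exp(M(N'(|k_K|+|m_K|))) for all K; in particular |u_{k_K m_K}| ≥ K exp(M(N(|k_K|+|m_K|))) for every K. -/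
lemma assocFn_zero_mem (M : ℕ → ℝ) (h0 : M 0 = 1) (r : ℝ) :
    (0 : ℝ) ∈ {x : ℝ | ∃ j : ℕ, x = Real.log (r ^ j / M j)} :=
  ⟨0, by simp [h0]⟩

lemma assocFn_nonneg (M : ℕ → ℝ) (h0 : M 0 = 1) (r : ℝ) : 0 ≤ assocFn M r := by
  by_cases h : BddAbove {x : ℝ | ∃ j : ℕ, x = Real.log (r ^ j / M j)}
  · exact le_csSup h (assocFn_zero_mem M h0 r)
  · rw [assocFn, Real.sSup_of_not_bddAbove h]

lemma assocFn_log_le (M : ℕ → ℝ) (hpos : ∀ j, 0 < M j) {x y : ℝ}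
    (hx : 0 < x) (hxy : x ≤ y) (j : ℕ) :
    Real.log (x ^ j / M j) ≤ Real.log (y ^ j / M j) :=
by
  apply Real.log_le_log (div_pos (pow_pos hx j) (hpos j))
  gcongr
  exact (hpos j).le

lemma assocFn_mono (M : ℕ → ℝ) (hpos : ∀ j, 0 < M j) (h0 : M 0 = 1) {x y : ℝ}
    (hx : 0 < x) (hxy : x ≤ y)
    (hb : BddAbove {z : ℝ | ∃ j : ℕ, z = Real.log (y ^ j / M j)}) :
    assocFn M x ≤ assocFn M y := by
  apply Real.sSup_le
  · rintro z ⟨j, rfl⟩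
    exact (assocFn_log_le M hpos hx hxy j).trans (le_csSup hb ⟨j, rfl⟩)
  · exact assocFn_nonneg M h0 y

lemma assocFn_unbdd (M : ℕ → ℝ) (hpos : ∀ j, 0 < M j) {x y : ℝ}
    (hx : 0 < x) (hxy : x ≤ y)
    (hnb : ¬ BddAbove {z : ℝ | ∃ j : ℕ, z = Real.log (x ^ j / M j)}) :
    ¬ BddAbove {z : ℝ | ∃ j : ℕ, z = Real.log (y ^ j / M j)} := by
  rintro ⟨b, hb⟩
  apply hnb
  refine ⟨b, ?_⟩
  rintro z ⟨j, rfl⟩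
  exact (assocFn_log_le M hpos hx hxy j).trans (hb ⟨j, rfl⟩)

theorem stmt_18 (Mk : ℕ → ℝ) (hpos : ∀ j, 0 < Mk j) (h0 : Mk 0 = 1)
    (a : ℝ) (N : ℝ) (hN : 0 < N)
    (k m : ℕ → ℤ)
    (hsmall : ∀ K : ℕ, 1 ≤ K →
      0 < |(k K : ℝ) + a * m K| ∧
      |(k K : ℝ) + a * m K| <
        (1 / (K : ℝ)) * Real.exp (-(assocFn Mk (N * (|(k K : ℝ)| + |(m K : ℝ)|)))))
    (u : ℕ → ℂ)
    (hu : ∀ K : ℕ, u K = 1 / (Complex.I * ((k K : ℂ) + (a : ℂ) * (m K : ℂ)))) :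
    (∀ K : ℕ, 1 ≤ K →
      (K : ℝ) * Real.exp (assocFn Mk (N * (|(k K : ℝ)| + |(m K : ℝ)|))) ≤
        ‖u K‖) ∧
    (∀ N' : ℝ, 0 < N' → N' ≤ N →
      ¬ ∃ C : ℝ, ∀ K : ℕ, 1 ≤ K →
        ‖u K‖ ≤ C * Real.exp (assocFn Mk (N' * (|(k K : ℝ)| + |(m K : ℝ)|)))) := by
  classical
  set r : ℕ → ℝ := fun K => |(k K : ℝ)| + |(m K : ℝ)| with hr
  set d : ℕ → ℝ := fun K => |(k K : ℝ) + a * m K| with hd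
  -- |u K| = 1 / d K
  have habs : ∀ K : ℕ, ‖u K‖ = 1 / d K := by
    intro K
    rw [hu K]
    have hz : ((k K : ℂ) + (a : ℂ) * (m K : ℂ)) = (((k K : ℝ) + a * m K : ℝ) : ℂ) := by
      push_cast; ring
    rw [hz, norm_div, norm_mul, Complex.norm_I, Complex.norm_real, Real.norm_eq_abs, norm_one, one_mul]
  -- r K ≥ 1 for K ≥ 1
  have hr1 : ∀ K : ℕ, 1 ≤ K → (1 : ℝ) ≤ r K := by
    intro K hK
    have hd0 := (hsmall K hK).1
    by_cases hk : k K = 0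
    · have hm : m K ≠ 0 := by
        intro hm
        rw [hk, hm] at hd0
        simp at hd0
      have h1 : (1 : ℝ) ≤ |(m K : ℝ)| := by
        rw [← Int.cast_abs]
        exact_mod_cast Int.one_le_abs hm
      have h2 : (0:ℝ) ≤ |(k K : ℝ)| := abs_nonneg _
      show (1:ℝ) ≤ |(k K : ℝ)| + |(m K : ℝ)|
      linarith
    · have h1 : (1 : ℝ) ≤ |(k K : ℝ)| := by
        rw [← Int.cast_abs]
        exact_mod_cast Int.one_le_abs hk
      have h2 : (0:ℝ) ≤ |(m K : ℝ)| := abs_nonneg _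
      show (1:ℝ) ≤ |(k K : ℝ)| + |(m K : ℝ)|
      linarith
  -- Part 1
  have part1 : ∀ K : ℕ, 1 ≤ K →
      (K : ℝ) * Real.exp (assocFn Mk (N * r K)) ≤ ‖u K‖ := by
    intro K hK
    obtain ⟨hd0, hdlt⟩ := hsmall K hK
    rw [habs K, le_div_iff₀ hd0]
    have hKpos : (1 : ℝ) ≤ (K : ℝ) := by exact_mod_cast hK
    set E := Real.exp (assocFn Mk (N * r K)) with hE
    have hEpos : 0 < E := Real.exp_pos _
    have hneg : Real.exp (-(assocFn Mk (N * r K))) = 1 / E := by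
      rw [Real.exp_neg, inv_eq_one_div]
    rw [hneg] at hdlt
    have hKp : (0:ℝ) < K := by linarith
    have hcalc : (K : ℝ) * E * d K < 1 := by
      calc (K : ℝ) * E * d K < (K : ℝ) * E * ((1 / K) * (1 / E)) := by
            apply mul_lt_mul_of_pos_left hdlt (by positivity)
        _ = 1 := by field_simp
    exact hcalc.le
  refine ⟨part1, ?_⟩
  -- Part 2
  intro N' hN' hle
  rintro ⟨C, hC⟩
  -- d K < 1 / K
  have hdlt1 : ∀ K : ℕ, 1 ≤ K → d K < 1 / K := by
    intro K hK
    have h := (hsmall K hK).2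
    have hM : 0 ≤ assocFn Mk (N * r K) := assocFn_nonneg Mk h0 _
    have he : Real.exp (-(assocFn Mk (N * r K))) ≤ 1 := Real.exp_le_one_iff.mpr (by linarith)
    have hKp : (0:ℝ) < K := by exact_mod_cast hK
    calc d K < 1 / K * Real.exp (-(assocFn Mk (N * r K))) := h
      _ ≤ 1 / K * 1 := by apply mul_le_mul_of_nonneg_left he (by positivity)
      _ = 1 / K := by ring
  -- r is unbounded (large K forces large r K)
  have hbig : ∀ (B : ℝ) (K₁ : ℕ), ∃ K : ℕ, K₁ ≤ K ∧ 1 ≤ K ∧ B ≤ r K := by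
    intro B K₁
    set b : ℤ := ⌈B⌉ with hb
    set s : Finset ℝ :=
      ((Finset.Icc (-b) b ×ˢ Finset.Icc (-b) b).image
        (fun p : ℤ × ℤ => |(p.1 : ℝ) + a * p.2|)).filter (fun x => 0 < x) with hs
    obtain ⟨δ, hδpos, hδle⟩ : ∃ δ : ℝ, 0 < δ ∧ ∀ x ∈ s, δ ≤ x := by
      by_cases h : s.Nonempty
      · exact ⟨s.min' h, (Finset.mem_filter.mp (s.min'_mem h)).2,
          fun x hx => s.min'_le x hx⟩
      · exact ⟨1, one_pos, fun x hx => absurd ⟨x, hx⟩ h⟩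
    refine ⟨max K₁ (⌈1 / δ⌉₊ + 1), le_max_left _ _,
      le_trans (Nat.le_add_left 1 _) (le_max_right _ _), ?_⟩
    set K := max K₁ (⌈1 / δ⌉₊ + 1) with hK
    have hK1 : 1 ≤ K := le_trans (Nat.le_add_left 1 _) (le_max_right _ _)
    by_contra hcon
    push_neg at hcon
    have hcon' : |(k K : ℝ)| + |(m K : ℝ)| < B := hcon
    have hkb : |k K| ≤ b := by
      have h1 : ((|k K| : ℤ) : ℝ) < (b : ℝ) := by
        rw [Int.cast_abs]
        have h2 : (0:ℝ) ≤ |(m K : ℝ)| := abs_nonneg _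
        have h3 := Int.le_ceil B
        linarith
      exact_mod_cast h1.le
    have hmb : |m K| ≤ b := by
      have h1 : ((|m K| : ℤ) : ℝ) < (b : ℝ) := by
        rw [Int.cast_abs]
        have h2 : (0:ℝ) ≤ |(k K : ℝ)| := abs_nonneg _
        have h3 := Int.le_ceil B
        linarith
      exact_mod_cast h1.le
    have hmem : d K ∈ s :=
      Finset.mem_filter.mpr ⟨Finset.mem_image.mpr ⟨(k K, m K),
        Finset.mem_product.mpr ⟨Finset.mem_Icc.mpr ⟨neg_le_of_abs_le hkb, le_of_abs_le hkb⟩,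
          Finset.mem_Icc.mpr ⟨neg_le_of_abs_le hmb, le_of_abs_le hmb⟩⟩, rfl⟩,
        (hsmall K hK1).1⟩
    have hδd : δ ≤ d K := hδle _ hmem
    have hKge : (⌈1 / δ⌉₊ + 1 : ℕ) ≤ K := le_max_right _ _
    have hKR : 1 / δ < (K : ℝ) := by
      calc 1 / δ ≤ (⌈1 / δ⌉₊ : ℝ) := Nat.le_ceil _
        _ < ((⌈1 / δ⌉₊ + 1 : ℕ) : ℝ) := by exact_mod_cast Nat.lt_succ_self _
        _ ≤ (K : ℝ) := by exact_mod_cast hKge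
    have hKpos : (0:ℝ) < K := by
      have : (1:ℝ) ≤ (K:ℝ) := by exact_mod_cast hK1
      linarith
    have h1K : 1 / (K : ℝ) < δ := by
      rw [div_lt_iff₀ hKpos]
      rw [div_lt_iff₀ hδpos] at hKR
      linarith
    have := hdlt1 K hK1
    linarith
  -- the main contradiction
  by_cases hex : ∃ K₀ : ℕ, 1 ≤ K₀ ∧
      ¬ BddAbove {z : ℝ | ∃ j : ℕ, z = Real.log ((N * r K₀) ^ j / Mk j)}
  · obtain ⟨K₀, hK₀, hnb⟩ := hex
    obtain ⟨K, hKge, hK1, hrK⟩ := hbig ((N / N') * r K₀) (⌈C⌉₊ + 1)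
    have hCK : C < (K : ℝ) := by
      calc C ≤ (⌈C⌉₊ : ℝ) := Nat.le_ceil C
        _ < ((⌈C⌉₊ + 1 : ℕ) : ℝ) := by exact_mod_cast Nat.lt_succ_self _
        _ ≤ (K : ℝ) := by exact_mod_cast hKge
    have hxy : N * r K₀ ≤ N' * r K := by
      have h1 : (N / N') * r K₀ ≤ r K := hrK
      calc N * r K₀ = N' * ((N / N') * r K₀) := by field_simp
        _ ≤ N' * r K := by apply mul_le_mul_of_nonneg_left h1 hN'.le
    have hnb' : ¬ BddAbove {z : ℝ | ∃ j : ℕ, z = Real.log ((N' * r K) ^ j / Mk j)} :=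
      assocFn_unbdd Mk hpos (by have := hr1 K₀ hK₀; positivity) hxy hnb
    have hzero : assocFn Mk (N' * r K) = 0 := by
      rw [assocFn, Real.sSup_of_not_bddAbove hnb']
    have h1 := part1 K hK1
    have h2 := hC K hK1
    have h2' : ‖u K‖ ≤ C * Real.exp (assocFn Mk (N' * r K)) := h2
    rw [hzero] at h2'
    simp only [Real.exp_zero, mul_one] at h2'
    have hM : 0 ≤ assocFn Mk (N * r K) := assocFn_nonneg Mk h0 _
    have hE : (1:ℝ) ≤ Real.exp (assocFn Mk (N * r K)) := Real.one_le_exp hM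
    have hKp : (1:ℝ) ≤ (K : ℝ) := by exact_mod_cast hK1
    nlinarith
  · push_neg at hex
    set K : ℕ := ⌈C⌉₊ + 1 with hKdef
    have hK1 : 1 ≤ K := Nat.le_add_left 1 _
    have hCK : C < (K : ℝ) := by
      calc C ≤ (⌈C⌉₊ : ℝ) := Nat.le_ceil C
        _ < ((⌈C⌉₊ + 1 : ℕ) : ℝ) := by exact_mod_cast Nat.lt_succ_self _
    have hbd := hex K hK1
    have hmono : assocFn Mk (N' * r K) ≤ assocFn Mk (N * r K) := by
      apply assocFn_mono Mk hpos h0 (by have := hr1 K hK1; positivity) ?_ hbd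
      have := hr1 K hK1
      apply mul_le_mul_of_nonneg_right hle (by linarith)
    have h1 := part1 K hK1
    have h2 := hC K hK1
    have h2' : ‖u K‖ ≤ C * Real.exp (assocFn Mk (N' * r K)) := h2
    have hCpos : 0 < C := by
      have hKp : (1:ℝ) ≤ (K : ℝ) := by exact_mod_cast hK1
      have hE : 0 < Real.exp (assocFn Mk (N * r K)) := Real.exp_pos _
      have hE' : 0 < Real.exp (assocFn Mk (N' * r K)) := Real.exp_pos _
      nlinarith
    have h3 : C * Real.exp (assocFn Mk (N' * r K)) ≤ C * Real.exp (assocFn Mk (N * r K)) := by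
      apply mul_le_mul_of_nonneg_left (Real.exp_le_exp.mpr hmono) hCpos.le
    have hE : 0 < Real.exp (assocFn Mk (N * r K)) := Real.exp_pos _
    nlinarith
end
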